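/- For each fixed μ ≥ 0, the function x ↦ ψ(x,μ) = x·exp(μ·√(2·log(1+x))) is convex on [0,∞). -/

import Mathlib

open Real Set

noncomputable def psi (x μ : ℝ) : ℝ := x * Real.exp (μ * Real.sqrt (2 * Real.log (1 + x)))

noncomputable def S (x : ℝ) : ℝ := Real.sqrt (2 * Real.log (1 + x))

noncomputable def F (μ x : ℝ) : ℝ :=
  Real.exp (μ * S x) * (1 + μ * (x / ((1 + x) * S x)))

noncomputable def F' (μ x : ℝ) : ℝ :=
  μ * Real.exp (μ * S x) *
    (((1 + x) * S x ^ 2 + μ * x * S x + S x ^ 2 - x) / ((1 + x) ^ 2 * S x ^ 3))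

lemma log_pos' {x : ℝ} (hx : 0 < x) : 0 < Real.log (1 + x) :=
  Real.log_pos (by linarith)

lemma S_pos {x : ℝ} (hx : 0 < x) : 0 < S x :=
  Real.sqrt_pos.mpr (by have := log_pos' hx; linarith)

lemma S_sq {x : ℝ} (hx : 0 < x) : S x ^ 2 = 2 * Real.log (1 + x) := by
  rw [S, Real.sq_sqrt]
  have := log_pos' hx
  linarith

lemma hasDerivAt_S {x : ℝ} (hx : 0 < x) :
    HasDerivAt S (1 / ((1 + x) * S x)) x := by
  have h1 : HasDerivAt (fun y : ℝ => 1 + y) 1 x := (hasDerivAt_id x).const_add 1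
  have h2 : HasDerivAt (fun y : ℝ => Real.log (1 + y)) (1 / (1 + x)) x := by
    have := (Real.hasDerivAt_log (by linarith : (1 : ℝ) + x ≠ 0)).comp x h1
    simpa [Function.comp_def] using this
  have h3 : HasDerivAt (fun y : ℝ => 2 * Real.log (1 + y)) (2 / (1 + x)) x := by
    have := h2.const_mul 2
    convert this using 1
    any_goals rfl
    ring
  have hne : 2 * Real.log (1 + x) ≠ 0 := by
    have := log_pos' hx; positivity
  have h4 := (Real.hasDerivAt_sqrt hne).comp x h3
  have hs := S_pos hx
  have h1x : (0:ℝ) < 1 + x := by linarith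
  convert h4 using 1
  any_goals rfl
  show 1 / ((1 + x) * S x) = 1 / (2 * Real.sqrt (2 * Real.log (1 + x))) * (2 / (1 + x))
  rw [show Real.sqrt (2 * Real.log (1 + x)) = S x from rfl]
  field_simp

lemma hasDerivAt_psi (μ : ℝ) {x : ℝ} (hx : 0 < x) :
    HasDerivAt (fun y => psi y μ) (F μ x) x := by
  have hs := S_pos hx
  have h1x : (0:ℝ) < 1 + x := by linarith
  have hS := hasDerivAt_S hx
  have hE : HasDerivAt (fun y => Real.exp (μ * S y))
      (Real.exp (μ * S x) * (μ * (1 / ((1 + x) * S x)))) x := (hS.const_mul μ).exp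
  have h := (hasDerivAt_id x).mul hE
  convert h using 1
  any_goals rfl
  show F μ x = 1 * (Real.exp (μ * S x)) + x * (Real.exp (μ * S x) * (μ * (1 / ((1 + x) * S x))))
  rw [F]
  field_simp

lemma hasDerivAt_F (μ : ℝ) {x : ℝ} (hx : 0 < x) :
    HasDerivAt (F μ) (F' μ x) x := by
  have hs := S_pos hx
  have h1x : (0:ℝ) < 1 + x := by linarith
  have hS := hasDerivAt_S hx
  have hE : HasDerivAt (fun y => Real.exp (μ * S y))
      (Real.exp (μ * S x) * (μ * (1 / ((1 + x) * S x)))) x := (hS.const_mul μ).exp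
  have hden : HasDerivAt (fun y : ℝ => (1 + y) * S y)
      (1 * S x + (1 + x) * (1 / ((1 + x) * S x))) x :=
    ((hasDerivAt_id x).const_add 1).mul hS
  have hdne : (1 + x) * S x ≠ 0 := by positivity
  have hg : HasDerivAt (fun y : ℝ => y / ((1 + y) * S y))
      ((1 * ((1 + x) * S x) - x * (1 * S x + (1 + x) * (1 / ((1 + x) * S x)))) /
        ((1 + x) * S x) ^ 2) x := (hasDerivAt_id x).div hden hdne
  have hin : HasDerivAt (fun y : ℝ => 1 + μ * (y / ((1 + y) * S y)))
      (μ * ((1 * ((1 + x) * S x) - x * (1 * S x + (1 + x) * (1 / ((1 + x) * S x)))) /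
        ((1 + x) * S x) ^ 2)) x := (hg.const_mul μ).const_add 1
  have h := hE.mul hin
  convert h using 1
  any_goals rfl
  rw [F']
  field_simp
  ring

lemma F'_nonneg {μ x : ℝ} (hμ : 0 ≤ μ) (hx : 0 < x) : 0 ≤ F' μ x := by
  have hs := S_pos hx
  have h1x : (0:ℝ) < 1 + x := by linarith
  have hs2 := S_sq hx
  have hlog : x / (1 + x) ≤ Real.log (1 + x) := by
    have h := Real.log_le_sub_one_of_pos (show (0:ℝ) < (1 + x)⁻¹ by positivity)
    rw [Real.log_inv] at h
    have : 1 - (1 + x)⁻¹ ≤ Real.log (1 + x) := by linarith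
    calc x / (1 + x) = 1 - (1 + x)⁻¹ := by field_simp; ring
    _ ≤ _ := this
  have hlog' : x ≤ Real.log (1 + x) * (1 + x) := by
    have := (div_le_iff₀ h1x).mp hlog
    linarith
  have hnum : 0 ≤ (1 + x) * S x ^ 2 + μ * x * S x + S x ^ 2 - x := by
    nlinarith [mul_nonneg (mul_nonneg hμ hx.le) hs.le]
  have hden : (0:ℝ) < (1 + x) ^ 2 * S x ^ 3 := by positivity
  rw [F']
  have h1 : (0:ℝ) ≤ μ * Real.exp (μ * S x) := by positivity
  exact mul_nonneg h1 (div_nonneg hnum hden.le)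

theorem psi_convex_in_x (μ : ℝ) (hμ : 0 ≤ μ) :
    ConvexOn ℝ (Set.Ici (0 : ℝ)) (fun x => psi x μ) := by
  apply MonotoneOn.convexOn_of_deriv (convex_Ici 0)
  · -- continuity on Ici 0
    intro x hx
    have h1x : (1:ℝ) + x ≠ 0 := by simp only [mem_Ici] at hx; intro h; linarith
    have hc : ContinuousAt (fun y => psi y μ) x := by
      apply ContinuousAt.mul continuousAt_id
      apply Real.continuous_exp.continuousAt.comp
      apply ContinuousAt.mul continuousAt_const
      apply Real.continuous_sqrt.continuousAt.comp
      apply ContinuousAt.mul continuousAt_const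
      exact (Real.continuousAt_log h1x).comp (by fun_prop)
    exact hc.continuousWithinAt
  · rw [interior_Ici]
    intro x hx
    exact (hasDerivAt_psi μ hx).differentiableAt.differentiableWithinAt
  · rw [interior_Ici]
    have hmono : MonotoneOn (F μ) (Ioi 0) := by
      apply monotoneOn_of_deriv_nonneg (convex_Ioi 0)
      · intro x hx
        exact (hasDerivAt_F μ hx).continuousAt.continuousWithinAt
      · rw [interior_Ioi]
        intro x hx
        exact (hasDerivAt_F μ hx).differentiableAt.differentiableWithinAt
      · rw [interior_Ioi]
        intro x hx
        rw [(hasDerivAt_F μ hx).deriv]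
        exact F'_nonneg hμ hx
    intro a ha b hb hab
    rw [(hasDerivAt_psi μ ha).deriv, (hasDerivAt_psi μ hb).deriv]
    exact hmono ha hb hab
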